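/- Let X be a real m×n matrix and Z a real n×n matrix such that X = XZ and ‖Z‖_* = rank(X). Then Z = SIM(X). -/

import Mathlib

open Matrix

/-- The nuclear norm of a real matrix: the sum of its singular values
(the square roots of the eigenvalues of `Aᵀ * A`). -/
noncomputable def nuclearNorm {m n : Type*} [Fintype m] [Fintype n] [DecidableEq n]
    (A : Matrix m n ℝ) : ℝ :=
  ∑ i, Real.sqrt ((show (Aᵀ * A).IsHermitian by
    rw [← Matrix.conjTranspose_eq_transpose_of_trivial]
    exact Matrix.isHermitian_conjTranspose_mul_self A).eigenvalues i)

/-- The shape interaction matrix of a real `m × n` matrix `X`: the `n × n`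
orthogonal projection matrix onto the row space of `X`. -/
noncomputable def SIM {m n : ℕ} (X : Matrix (Fin m) (Fin n) ℝ) :
    Matrix (Fin n) (Fin n) ℝ :=
  let U : Submodule ℝ (EuclideanSpace ℝ (Fin n)) :=
    Submodule.span ℝ (Set.range fun i => (WithLp.toLp 2 (X i) : EuclideanSpace ℝ (Fin n)))
  LinearMap.toMatrix'
    ((WithLp.linearEquiv 2 ℝ (Fin n → ℝ)).toLinearMap ∘ₗ
      ((U.subtypeL.comp (U.orthogonalProjectionOnto)).toLinearMap :
        EuclideanSpace ℝ (Fin n) →ₗ[ℝ] EuclideanSpace ℝ (Fin n)) ∘ₗ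
      (WithLp.linearEquiv 2 ℝ (Fin n → ℝ)).symm.toLinearMap :
      (Fin n → ℝ) →ₗ[ℝ] (Fin n → ℝ))

/-! ### Auxiliary lemmas -/

lemma euclid_sum_apply {n : ℕ} {ι : Type*} (s : Finset ι) (f : ι → EuclideanSpace ℝ (Fin n))
    (i : Fin n) : (∑ k ∈ s, f k) i = ∑ k ∈ s, f k i := by
  rw [WithLp.ofLp_sum, Finset.sum_apply]

/-- The row space of a matrix, as a submodule of Euclidean space. -/
noncomputable abbrev rowSpace {m n : ℕ} (X : Matrix (Fin m) (Fin n) ℝ) :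
    Submodule ℝ (EuclideanSpace ℝ (Fin n)) :=
  Submodule.span ℝ (Set.range fun i => (WithLp.toLp 2 (X i) : EuclideanSpace ℝ (Fin n)))

variable {m n : ℕ} (X : Matrix (Fin m) (Fin n) ℝ)

theorem SIM_mulVec (v : EuclideanSpace ℝ (Fin n)) :
    SIM X *ᵥ v = ((rowSpace X).orthogonalProjectionOnto v : EuclideanSpace ℝ (Fin n)) := by
  rw [SIM, ← Matrix.toLin'_apply, Matrix.toLin'_toMatrix']
  rfl

theorem SIM_mulVec_mem (v : EuclideanSpace ℝ (Fin n)) : WithLp.toLp 2 (SIM X *ᵥ v) ∈ rowSpace X := by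
  rw [SIM_mulVec, WithLp.toLp_ofLp]; exact ((rowSpace X).orthogonalProjectionOnto v).2

theorem SIM_mulVec_of_mem {v : EuclideanSpace ℝ (Fin n)} (hv : v ∈ rowSpace X) :
    SIM X *ᵥ v = v := by
  rw [SIM_mulVec]
  exact congrArg WithLp.ofLp (Submodule.starProjection_eq_self_iff (K := rowSpace X) (v := v) |>.2 hv)

theorem SIM_transpose : (SIM X)ᵀ = SIM X := by
  ext i j
  have key : ∀ a b : EuclideanSpace ℝ (Fin n),
      @inner ℝ (EuclideanSpace ℝ (Fin n)) _ (WithLp.toLp 2 (SIM X *ᵥ a)) b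
        = @inner ℝ (EuclideanSpace ℝ (Fin n)) _ a (WithLp.toLp 2 (SIM X *ᵥ b)) := by
    intro a b
    rw [SIM_mulVec, SIM_mulVec, WithLp.toLp_ofLp, WithLp.toLp_ofLp]
    exact Submodule.inner_starProjection_left_eq_right _ a b
  have h := key (EuclideanSpace.single j 1) (EuclideanSpace.single i 1)
  simpa [PiLp.inner_apply, EuclideanSpace.single_apply, Finset.sum_ite_eq,
    Matrix.mulVec, dotProduct, mul_comm, Matrix.transpose_apply] using h.symm

theorem rank_eq_finrank_rowSpace : X.rank = Module.finrank ℝ (rowSpace X) := by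
  rw [← Matrix.rank_transpose, Matrix.rank_eq_finrank_span_cols]
  have hmap : rowSpace X = (Submodule.span ℝ (Set.range Xᵀ.col)).map
      ((WithLp.linearEquiv 2 ℝ (Fin n → ℝ)).symm : (Fin n → ℝ) →ₗ[ℝ] EuclideanSpace ℝ (Fin n)) := by
    rw [Submodule.map_span, ← Set.range_comp]
    rfl
  rw [hmap, LinearEquiv.finrank_map_eq]

theorem SIM_trace : (SIM X).trace = (X.rank : ℝ) := by
  classical
  have hrank := rank_eq_finrank_rowSpace X
  let b := stdOrthonormalBasis ℝ (rowSpace X)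
  have hdiag : ∀ i, SIM X i i = ∑ k, ((b k : EuclideanSpace ℝ (Fin n)) i)^2 := by
    intro i
    have h1 : SIM X i i
        = (((rowSpace X).orthogonalProjectionOnto (EuclideanSpace.single i 1) :
            EuclideanSpace ℝ (Fin n))) i := by
      have h := congrFun (SIM_mulVec X (EuclideanSpace.single i 1)) i
      simpa [Matrix.mulVec, dotProduct, EuclideanSpace.single_apply] using h
    rw [h1, b.orthogonalProjectionOnto_apply_eq_sum]
    simp only [AddSubmonoidClass.coe_finset_sum, SetLike.val_smul, euclid_sum_apply,
      PiLp.smul_apply, smul_eq_mul, PiLp.inner_apply, RCLike.inner_apply, conj_trivial,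
      EuclideanSpace.single_apply, mul_ite, mul_one, mul_zero, Finset.sum_ite_eq,
      Finset.mem_univ, if_true]
    refine Finset.sum_congr rfl fun k _ => ?_
    simp only [ite_mul, one_mul, zero_mul, Finset.sum_ite_eq', Finset.mem_univ, if_true]
    simp [pow_two]
  have hnorm : ∀ k, ∑ i, ((b k : EuclideanSpace ℝ (Fin n)) i)^2 = 1 := by
    intro k
    have h := b.orthonormal.1 k
    have h2 : @inner ℝ _ _ ((b k : EuclideanSpace ℝ (Fin n)))
        ((b k : EuclideanSpace ℝ (Fin n))) = 1 := by
      rw [← Submodule.coe_inner, real_inner_self_eq_norm_sq]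
      rw [h]; norm_num
    rw [PiLp.inner_apply] at h2
    simpa [pow_two] using h2
  rw [hrank, Matrix.trace]
  simp only [Matrix.diag_apply, hdiag]
  rw [Finset.sum_comm]
  simp [hnorm]

lemma star_eq_transpose_real {k : ℕ} (V : Matrix (Fin k) (Fin k) ℝ) : star V = Vᵀ := by
  ext i j; simp [Matrix.star_apply]

lemma quad_eq_sum {k : ℕ} (G : Matrix (Fin k) (Fin k) ℝ) (hG : G.IsHermitian) (v : Fin k → ℝ) :
    v ⬝ᵥ (G *ᵥ v) = ∑ i, hG.eigenvalues i
      * (((hG.eigenvectorUnitary : Matrix (Fin k) (Fin k) ℝ)ᵀ *ᵥ v) i)^2 := by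
  set V := (hG.eigenvectorUnitary : Matrix (Fin k) (Fin k) ℝ) with hV
  set c := Vᵀ *ᵥ v with hc
  have hstar : star V = Vᵀ := star_eq_transpose_real V
  conv_lhs => rw [hG.spectral_theorem, Unitary.conjStarAlgAut_apply]
  rw [hstar, ← Matrix.mulVec_mulVec, ← Matrix.mulVec_mulVec,
    dotProduct_mulVec v V, ← Matrix.mulVec_transpose]
  simp only [dotProduct, Matrix.mulVec_diagonal, pow_two]
  exact Finset.sum_congr rfl fun i _ => by simp [← hc]; ring

lemma dot_self_eq_sum {k : ℕ} (G : Matrix (Fin k) (Fin k) ℝ) (hG : G.IsHermitian)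
    (v : Fin k → ℝ) :
    v ⬝ᵥ v = ∑ i, (((hG.eigenvectorUnitary : Matrix (Fin k) (Fin k) ℝ)ᵀ *ᵥ v) i)^2 := by
  set V := (hG.eigenvectorUnitary : Matrix (Fin k) (Fin k) ℝ) with hV
  have hVV : V * Vᵀ = 1 := by
    rw [← star_eq_transpose_real V]
    exact (Matrix.mem_unitaryGroup_iff).mp hG.eigenvectorUnitary.2
  have h : v ⬝ᵥ v = v ⬝ᵥ ((V * Vᵀ) *ᵥ v) := by rw [hVV, Matrix.one_mulVec]
  rw [h, ← Matrix.mulVec_mulVec, dotProduct_mulVec v V, ← Matrix.mulVec_transpose]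
  simp [dotProduct, pow_two]

lemma coord_eq_dot {k : ℕ} (G : Matrix (Fin k) (Fin k) ℝ) (hG : G.IsHermitian) (v : Fin k → ℝ)
    (i : Fin k) : ((hG.eigenvectorUnitary : Matrix (Fin k) (Fin k) ℝ)ᵀ *ᵥ v) i
      = (hG.eigenvectorBasis i : Fin k → ℝ) ⬝ᵥ v := by
  simp [Matrix.mulVec, dotProduct, Matrix.transpose_apply]

lemma trace_eq_sum_eigenvalues {k : ℕ} (G : Matrix (Fin k) (Fin k) ℝ) (hG : G.IsHermitian) :
    G.trace = ∑ i, hG.eigenvalues i := by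
  have hVV : star (hG.eigenvectorUnitary : Matrix (Fin k) (Fin k) ℝ)
      * (hG.eigenvectorUnitary : Matrix (Fin k) (Fin k) ℝ) = 1 := by
    have h2 := hG.eigenvectorUnitary.2
    rw [Matrix.mem_unitaryGroup_iff'] at h2
    exact h2
  conv_lhs => rw [hG.spectral_theorem, Unitary.conjStarAlgAut_apply]
  rw [Matrix.trace_mul_cycle, hVV, Matrix.one_mul, Matrix.trace]
  simp [Matrix.diag]

set_option maxHeartbeats 1000000 in
/-- If `X = X * Z` and the nuclear norm of `Z` equals `rank X`, then `Z = SIM X`. -/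
theorem eq_sim_of_nuclearNorm_eq_rank {m n : ℕ} (X : Matrix (Fin m) (Fin n) ℝ)
    (Z : Matrix (Fin n) (Fin n) ℝ) (hXZ : X = X * Z)
    (hnn : nuclearNorm Z = (X.rank : ℝ)) :
    Z = SIM X := by
  classical
  set P := SIM X with hPdef
  -- Step 1: `Zᵀ` fixes the row space of `X`.
  have hrow : ∀ v ∈ rowSpace X, Zᵀ *ᵥ v = v := by
    intro v hv
    induction hv using Submodule.span_induction with
    | mem x hx =>
      obtain ⟨i, rfl⟩ := hx
      funext j
      have h := congrFun (congrFun hXZ i) j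
      rw [Matrix.mul_apply] at h
      simp only [Matrix.mulVec, dotProduct, Matrix.transpose_apply, WithLp.ofLp_toLp]
      rw [h]
      exact Finset.sum_congr rfl fun k _ => mul_comm _ _
    | zero => simp
    | add x y _ _ hx hy => rw [WithLp.ofLp_add, Matrix.mulVec_add, hx, hy]
    | smul c x _ hx => rw [WithLp.ofLp_smul, Matrix.mulVec_smul, hx]
  -- Step 2: matrix identities with `P`.
  have hcol : ∀ (M : Matrix (Fin n) (Fin n) ℝ) (N : Matrix (Fin n) (Fin n) ℝ) (i j : Fin n),
      (M * N) i j = (M *ᵥ (fun k => N k j)) i := by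
    intro M N i j
    simp [Matrix.mul_apply, Matrix.mulVec, dotProduct]
  have hPcol : ∀ j : Fin n, WithLp.toLp 2 (fun k => P k j) ∈ rowSpace X := by
    intro j
    have : (fun k => P k j) = P *ᵥ (EuclideanSpace.single j 1 : EuclideanSpace ℝ (Fin n)) := by
      funext k
      simp [Matrix.mulVec, dotProduct, EuclideanSpace.single_apply]
    rw [this]
    exact SIM_mulVec_mem X _
  have hZtP : Zᵀ * P = P := by
    ext i j
    rw [hcol]; exact congrFun (hrow _ (hPcol j)) i
  have hPP : P * P = P := by
    ext i j
    rw [hcol]; exact congrFun (SIM_mulVec_of_mem X (hPcol j)) i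
  have hPt : Pᵀ = P := SIM_transpose X
  have hPZ : P * Z = P := by
    have h := congrArg Matrix.transpose hZtP
    rwa [Matrix.transpose_mul, Matrix.transpose_transpose, hPt] at h
  -- Step 3: spectral data of `Zᴴ * Z`.
  set G := Zᴴ * Z with hGdef
  have hE : G.IsHermitian := Matrix.isHermitian_conjTranspose_mul_self Z
  set μ := (Matrix.isHermitian_conjTranspose_mul_self Z).eigenvalues with hμ
  have hμnonneg : ∀ i, 0 ≤ μ i :=
    (Matrix.posSemidef_conjTranspose_mul_self Z).eigenvalues_nonneg
  have hZconj : Zᴴ = Zᵀ := by ext i j; simp [Matrix.conjTranspose_apply]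
  -- Step 4: the quadratic form of `G` dominates the norm on the row space.
  have hlow : ∀ v ∈ rowSpace X, v ⬝ᵥ v ≤ v ⬝ᵥ (G *ᵥ v) := by
    intro v hv
    set w : EuclideanSpace ℝ (Fin n) := WithLp.toLp 2 (Z *ᵥ v) with hw
    have hPw : P *ᵥ w = v := by
      rw [hw, WithLp.ofLp_toLp, Matrix.mulVec_mulVec, hPZ, SIM_mulVec_of_mem X hv]
    have hvG : v ⬝ᵥ (G *ᵥ v) = w ⬝ᵥ w := by
      rw [hGdef, hZconj, ← Matrix.mulVec_mulVec, dotProduct_mulVec v Zᵀ,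
        Matrix.vecMul_transpose]
    have hnorm : ‖(v : EuclideanSpace ℝ (Fin n))‖ ≤ ‖w‖ := by
      have h1 : (v : EuclideanSpace ℝ (Fin n))
          = ((rowSpace X).orthogonalProjectionOnto w : EuclideanSpace ℝ (Fin n)) := by
        apply WithLp.ofLp_injective 2; rw [← SIM_mulVec]; exact hPw.symm
      rw [h1]
      have h2 := ((rowSpace X).orthogonalProjectionOnto).le_opNorm w
      calc ‖((rowSpace X).orthogonalProjectionOnto w : EuclideanSpace ℝ (Fin n))‖
          = ‖(rowSpace X).orthogonalProjectionOnto w‖ := rfl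
        _ ≤ ‖(rowSpace X).orthogonalProjectionOnto‖ * ‖w‖ := h2
        _ ≤ 1 * ‖w‖ := by
            apply mul_le_mul_of_nonneg_right ((rowSpace X).orthogonalProjectionOnto_norm_le) (norm_nonneg w)
        _ = ‖w‖ := one_mul _
    have hdots : ∀ u : EuclideanSpace ℝ (Fin n), (u : Fin n → ℝ) ⬝ᵥ u = ‖u‖^2 := by
      intro u
      rw [← real_inner_self_eq_norm_sq, PiLp.inner_apply]
      simp [dotProduct, pow_two]
    rw [hvG, hdots v, hdots w]
    exact pow_le_pow_left₀ (norm_nonneg _) hnorm 2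
  -- Step 5: coordinates with respect to the eigenbasis.
  set e := (Matrix.isHermitian_conjTranspose_mul_self Z).eigenvectorBasis with he
  set V := ((Matrix.isHermitian_conjTranspose_mul_self Z).eigenvectorUnitary :
    Matrix (Fin n) (Fin n) ℝ) with hVdef
  -- the subspace spanned by eigenvectors with small eigenvalues
  set S : Submodule ℝ (EuclideanSpace ℝ (Fin n)) :=
    Submodule.span ℝ (Set.range fun i : {i : Fin n // μ i < 1} =>
      (e i : EuclideanSpace ℝ (Fin n))) with hSdef
  have hcoordS : ∀ v ∈ S, ∀ i : Fin n, ¬ μ i < 1 →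
      @inner ℝ (EuclideanSpace ℝ (Fin n)) _ (e i) v = 0 := by
    intro v hv
    induction hv using Submodule.span_induction with
    | mem x hx =>
      intro i hi
      obtain ⟨⟨j, hj⟩, rfl⟩ := hx
      have hij : i ≠ j := by rintro rfl; exact hi hj
      exact e.orthonormal.2 hij
    | zero => intro i _; simp
    | add x y _ _ hx hy => intro i hi; rw [inner_add_right, hx i hi, hy i hi, add_zero]
    | smul c x _ hx => intro i hi; rw [inner_smul_right, hx i hi, mul_zero]
  have hdisj : Disjoint S (rowSpace X) := by
    rw [Submodule.disjoint_def]
    intro v hvS hvR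
    by_contra hv0
    have hcinner : ∀ i, (Vᵀ *ᵥ v) i = @inner ℝ (EuclideanSpace ℝ (Fin n)) _ (e i) v := by
      intro i
      rw [hVdef, coord_eq_dot _ (Matrix.isHermitian_conjTranspose_mul_self Z), PiLp.inner_apply]
      rw [he]
      simp [dotProduct, mul_comm]
    have hquad := quad_eq_sum (Zᴴ * Z) (Matrix.isHermitian_conjTranspose_mul_self Z) v
    have hdot := dot_self_eq_sum (Zᴴ * Z) (Matrix.isHermitian_conjTranspose_mul_self Z) v
    rw [← hVdef, ← hμ, ← hGdef] at hquad
    rw [← hVdef] at hdot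
    have hczero : ∀ i, ¬ μ i < 1 → (Vᵀ *ᵥ v) i = 0 := by
      intro i hi; rw [hcinner i]; exact hcoordS v hvS i hi
    have hex : ∃ i, (Vᵀ *ᵥ v) i ≠ 0 := by
      by_contra hall
      push_neg at hall
      apply hv0
      have hzero : v ⬝ᵥ v = 0 := by
        rw [hdot]; exact Finset.sum_eq_zero fun i _ => by rw [hall i]; ring
      exact WithLp.ofLp_injective 2 (dotProduct_self_eq_zero.mp hzero)
    obtain ⟨i₀, hi₀⟩ := hex
    have hμi₀ : μ i₀ < 1 := by by_contra h; exact hi₀ (hczero i₀ h)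
    have hstrict : v ⬝ᵥ (G *ᵥ v) < v ⬝ᵥ v := by
      rw [hquad, hdot]
      apply Finset.sum_lt_sum
      · intro i _
        rcases eq_or_ne ((Vᵀ *ᵥ v) i) 0 with h | h
        · simp [h]
        · have hμi : μ i < 1 := by by_contra hcon; exact h (hczero i hcon)
          nlinarith [hμnonneg i, sq_nonneg ((Vᵀ *ᵥ v) i), sq_pos_of_ne_zero h]
      · refine ⟨i₀, Finset.mem_univ _, ?_⟩
        nlinarith [sq_pos_of_ne_zero hi₀, hμnonneg i₀]
    exact absurd (hlow v hvR) (not_le.mpr hstrict)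
  -- Step 6: counting eigenvalues.
  have hScard : Module.finrank ℝ S = Fintype.card {i : Fin n // μ i < 1} := by
    rw [hSdef]
    apply finrank_span_eq_card
    exact (e.orthonormal.comp _ Subtype.val_injective).linearIndependent
  have hrank := rank_eq_finrank_rowSpace X
  have hcount : Fintype.card {i : Fin n // μ i < 1} + X.rank ≤ n := by
    have h := Submodule.finrank_add_finrank_le_of_disjoint hdisj
    rw [hScard, ← hrank] at h
    simpa [finrank_euclideanSpace] using h
  set B : Finset (Fin n) := Finset.univ.filter (fun i => μ i < 1) with hB
  have hBcard : B.card = Fintype.card {i : Fin n // μ i < 1} := by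
    rw [Fintype.card_subtype]
  have hBccard : X.rank ≤ Bᶜ.card := by
    rw [Finset.card_compl, Fintype.card_fin, hBcard]
    omega
  -- Step 7: the sum of the eigenvalues is `rank X`.
  have hsplit : ∑ i ∈ Bᶜ, Real.sqrt (μ i) + ∑ i ∈ B, Real.sqrt (μ i) = (X.rank : ℝ) := by
    rw [← hnn, nuclearNorm]
    rw [← Finset.sum_add_sum_compl B, add_comm]
    rfl
  have hBc_ge : (Bᶜ.card : ℝ) ≤ ∑ i ∈ Bᶜ, Real.sqrt (μ i) := by
    have : ∀ i ∈ Bᶜ, (1:ℝ) ≤ Real.sqrt (μ i) := by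
      intro i hi
      rw [Finset.mem_compl, hB, Finset.mem_filter] at hi
      push_neg at hi
      have : 1 ≤ μ i := hi (Finset.mem_univ i)
      exact Real.one_le_sqrt.mpr this
    calc (Bᶜ.card : ℝ) = ∑ _i ∈ Bᶜ, (1:ℝ) := by simp
      _ ≤ _ := Finset.sum_le_sum this
  have hBnonneg : 0 ≤ ∑ i ∈ B, Real.sqrt (μ i) :=
    Finset.sum_nonneg fun i _ => Real.sqrt_nonneg _
  -- all the inequalities must be equalities
  have hceq : ((Bᶜ.card : ℕ) : ℝ) = (X.rank : ℝ) ∧ (∑ i ∈ B, Real.sqrt (μ i)) = 0 ∧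
      ∑ i ∈ Bᶜ, Real.sqrt (μ i) = (Bᶜ.card : ℝ) := by
    have h1 : ((X.rank : ℕ) : ℝ) ≤ (Bᶜ.card : ℝ) := by exact_mod_cast hBccard
    constructor
    · linarith
    constructor
    · linarith
    · linarith
  obtain ⟨hcard_eq, hBzero, hBceq⟩ := hceq
  -- each eigenvalue is 1 on `Bᶜ` and 0 on `B`
  have hμB : ∀ i ∈ B, μ i = 0 := by
    intro i hi
    have h := (Finset.sum_eq_zero_iff_of_nonneg
      (fun j _ => Real.sqrt_nonneg (μ j))).mp hBzero i hi
    have := hμnonneg i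
    nlinarith [Real.sq_sqrt (hμnonneg i), h]
  have hμBc : ∀ i ∈ Bᶜ, μ i = 1 := by
    intro i hi
    have hge : ∀ j ∈ Bᶜ, (1:ℝ) ≤ Real.sqrt (μ j) := by
      intro j hj
      rw [Finset.mem_compl, hB, Finset.mem_filter] at hj
      push_neg at hj
      exact Real.one_le_sqrt.mpr (hj (Finset.mem_univ j))
    -- sum of (sqrt μ j - 1) over Bᶜ is zero with nonneg terms
    have hzero : ∑ j ∈ Bᶜ, (Real.sqrt (μ j) - 1) = 0 := by
      rw [Finset.sum_sub_distrib]
      simp [hBceq]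
    have h := (Finset.sum_eq_zero_iff_of_nonneg
      (fun j hj => by linarith [hge j hj])).mp hzero i hi
    have hsqrt : Real.sqrt (μ i) = 1 := by linarith
    nlinarith [Real.sq_sqrt (hμnonneg i), hsqrt]
  have htrG : G.trace = (X.rank : ℝ) := by
    rw [hGdef, trace_eq_sum_eigenvalues (Zᴴ * Z) (Matrix.isHermitian_conjTranspose_mul_self Z),
      ← hμ]
    have h1 : ∑ i ∈ B, μ i = 0 := Finset.sum_eq_zero hμB
    have h2 : ∑ i ∈ Bᶜ, μ i = (Bᶜ.card : ℝ) := by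
      rw [Finset.sum_congr rfl hμBc]; simp
    rw [← Finset.sum_add_sum_compl B, h1, h2, zero_add]
    exact hcard_eq
  -- Step 8: conclude `Z = P` by showing the Frobenius norm of `Z - P` vanishes.
  have htrP : P.trace = (X.rank : ℝ) := SIM_trace X
  have hZtZtr : (Zᵀ * Z).trace = (X.rank : ℝ) := by rw [← hZconj, ← hGdef]; exact htrG
  have hPtZ : Pᵀ * Z = P := by rw [hPt, hPZ]
  have hPtP : Pᵀ * P = P := by rw [hPt, hPP]
  have hexp : (Z - P)ᵀ * (Z - P) = Zᵀ * Z - Zᵀ * P - Pᵀ * Z + Pᵀ * P := by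
    rw [Matrix.transpose_sub]
    noncomm_ring
  have htr0 : ((Z - P)ᵀ * (Z - P)).trace = 0 := by
    rw [hexp, Matrix.trace_add, Matrix.trace_sub, Matrix.trace_sub, hZtP, hPtZ, hPtP,
      hZtZtr, htrP]
    ring
  have hsq : ∑ j, ∑ i, ((Z - P) i j)^2 = 0 := by
    rw [← htr0, Matrix.trace]
    refine Finset.sum_congr rfl fun j _ => ?_
    rw [Matrix.diag_apply, Matrix.mul_apply]
    exact Finset.sum_congr rfl fun i _ => by rw [Matrix.transpose_apply]; ring
  have hentry : ∀ i j, (Z - P) i j = 0 := by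
    intro i j
    have h1 := (Finset.sum_eq_zero_iff_of_nonneg
      (fun j _ => Finset.sum_nonneg fun i _ => sq_nonneg ((Z - P) i j))).mp hsq j
      (Finset.mem_univ j)
    have h2 := (Finset.sum_eq_zero_iff_of_nonneg
      (fun i _ => sq_nonneg ((Z - P) i j))).mp h1 i (Finset.mem_univ i)
    exact sq_eq_zero_iff.mp h2
  have hZP0 : Z - P = 0 := by
    ext i j
    rw [Matrix.zero_apply]
    exact hentry i j
  show Z = P
  exact sub_eq_zero.mp hZP0
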